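/- Let S(x_1,...,x_N) be a multivariate tensor-product B-spline. If for a fixed coordinate j the coefficients satisfy (a_{...i_j...} - a_{...(i_j-1)...})/Δ_{i_j} ≤ (a_{...(i_j-1)...} - a_{...(i_j-2)...})/Δ_{i_j-1} for all multi-indices, where Δ_{i_j} = t_{j,i_j+r_j} - t_{j,i_j}, then S is concave in the variable x_j (with the other variables held fixed) on the interior knot range. -/

import Mathlib

/-- Cox–de Boor B-spline basis function `B_i^r(x; t)`, with the convention that
terms with zero denominator vanish (division by zero is zero in Lean). -/
noncomputable def Bspl (t : ℕ → ℝ) : ℕ → ℕ → ℝ → ℝ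
  | 0, i, x => if t i ≤ x ∧ x < t (i + 1) then 1 else 0
  | r + 1, i, x =>
      (x - t i) / (t (i + r + 1) - t i) * Bspl t r i x
        + (t (i + r + 2) - x) / (t (i + r + 2) - t (i + 1)) * Bspl t r (i + 1) x

section Aux

variable {t : ℕ → ℝ}

lemma bspl_zero_def (t : ℕ → ℝ) (i : ℕ) (x : ℝ) :
    Bspl t 0 i x = if t i ≤ x ∧ x < t (i + 1) then 1 else 0 := rfl

lemma bspl_succ (t : ℕ → ℝ) (r i : ℕ) (x : ℝ) :
    Bspl t (r + 1) i x =
      (x - t i) / (t (i + r + 1) - t i) * Bspl t r i x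
        + (t (i + r + 2) - x) / (t (i + r + 2) - t (i + 1)) * Bspl t r (i + 1) x := rfl

variable {t : ℕ → ℝ}

lemma bspl_zero_of_lt (ht : Monotone t) : ∀ (r i : ℕ) {x : ℝ}, x < t i → Bspl t r i x = 0 := by
  intro r
  induction r with
  | zero =>
    intro i x hx
    rw [bspl_zero_def, if_neg]
    rintro ⟨h1, -⟩; exact absurd hx (not_lt.2 h1)
  | succ r IH =>
    intro i x hx
    rw [bspl_succ, IH i hx, IH (i+1) (lt_of_lt_of_le hx (ht (Nat.le_succ i))), mul_zero, mul_zero,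
      add_zero]

lemma bspl_zero_of_ge (ht : Monotone t) : ∀ (r i : ℕ) {x : ℝ}, t (i + r + 1) ≤ x → Bspl t r i x = 0 := by
  intro r
  induction r with
  | zero =>
    intro i x hx
    rw [bspl_zero_def, if_neg]
    rintro ⟨-, h2⟩; exact absurd h2 (not_lt.2 hx)
  | succ r IH =>
    intro i x hx
    have h1 : t (i + r + 1) ≤ x := le_trans (ht (by omega)) hx
    have h2 : t ((i + 1) + r + 1) ≤ x := le_trans (le_of_eq (by ring_nf)) hx
    rw [bspl_succ, IH i h1, IH (i+1) h2, mul_zero, mul_zero, add_zero]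

lemma bspl_nonneg (ht : Monotone t) : ∀ (r i : ℕ) (x : ℝ), 0 ≤ Bspl t r i x := by
  intro r
  induction r with
  | zero =>
    intro i x
    rw [bspl_zero_def]
    split <;> norm_num
  | succ r IH =>
    intro i x
    rw [bspl_succ]
    have term : ∀ (k : ℕ) (a : ℝ), t (i + r + 2) = a ∨ x ≤ a →
        True := by intro _ _ _; trivial
    apply add_nonneg
    · rcases eq_or_ne (Bspl t r i x) 0 with h | h
      · rw [h, mul_zero]
      · have hx1 : t i ≤ x := by
          by_contra hc
          exact h (bspl_zero_of_lt ht r i (not_le.1 hc))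
        exact mul_nonneg (div_nonneg (by linarith) (sub_nonneg.2 (ht (by omega)))) (IH i x)
    · rcases eq_or_ne (Bspl t r (i+1) x) 0 with h | h
      · rw [h, mul_zero]
      · have hx1 : x < t ((i+1) + r + 1) := by
          by_contra hc
          exact h (bspl_zero_of_ge ht r (i+1) (not_lt.1 hc))
        have : x ≤ t (i + r + 2) := le_of_lt (lt_of_lt_of_le hx1 (ht (by omega)))
        exact mul_nonneg (div_nonneg (by linarith) (sub_nonneg.2 (ht (by omega)))) (IH (i+1) x)

lemma bspl_left_knot (ht : Monotone t) :
    ∀ (r i : ℕ), t i < t (i + r) → Bspl t r i (t i) = 0 := by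
  intro r
  induction r with
  | zero => intro i h; simp at h
  | succ r IH =>
    intro i h
    rw [bspl_succ, sub_self, zero_div, zero_mul, zero_add]
    rcases lt_or_eq_of_le (ht (Nat.le_succ i)) with h1 | h1
    · rw [bspl_zero_of_lt ht r (i+1) h1, mul_zero]
    · have : Bspl t r (i+1) (t i) = 0 := by
        rw [h1]
        apply IH (i+1)
        rw [← h1]
        calc t i < t (i + (r+1)) := h
        _ ≤ t ((i+1) + r) := le_of_eq (by ring_nf)
      rw [this, mul_zero]

/-- evaluation of a degree-0 spline sum -/
lemma bspl_eval_zero (ht : Monotone t) {p q : ℕ} {x : ℝ} (hpx : t p ≤ x) (hxq : x < t q) :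
    ∃ k0, p ≤ k0 ∧ k0 < q ∧ t k0 ≤ x ∧ x < t (k0 + 1) ∧
      ∀ d : ℕ → ℝ, ∑ k ∈ Finset.Ico p q, d k * Bspl t 0 k x = d k0 := by
  have hq : ∃ k, x < t (k + 1) := by
    have hq1 : 1 ≤ q := by
      by_contra hc
      have : q = 0 := by omega
      subst this
      exact absurd hxq (not_lt.2 (le_trans (ht (Nat.zero_le p)) hpx))
    exact ⟨q - 1, by rwa [Nat.sub_add_cancel hq1]⟩
  set k0 := Nat.find hq with hk0
  have hfind : x < t (k0 + 1) := Nat.find_spec hq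
  have hmin : ∀ m, m < k0 → ¬ x < t (m + 1) := fun m hm => Nat.find_min hq hm
  have hpk : p ≤ k0 := by
    by_contra hc
    push_neg at hc
    have h1 : t (k0 + 1) ≤ t p := ht (by omega)
    exact absurd hfind (not_lt.2 (le_trans h1 hpx))
  have htk0 : t k0 ≤ x := by
    rcases Nat.eq_zero_or_pos k0 with h0 | h0
    · have : p = 0 := by omega
      rw [h0, ← this]; exact hpx
    · have := hmin (k0 - 1) (by omega)
      push_neg at this
      rwa [Nat.sub_add_cancel h0] at this
  have hkq : k0 < q := by
    by_contra hc
    push_neg at hc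
    exact absurd (lt_of_le_of_lt htk0 hxq) (not_lt.2 (ht hc))
  refine ⟨k0, hpk, hkq, htk0, hfind, fun d => ?_⟩
  rw [Finset.sum_eq_single k0]
  · rw [bspl_zero_def, if_pos ⟨htk0, hfind⟩, mul_one]
  · intro k hk hne
    rw [bspl_zero_def, if_neg, mul_zero]
    rintro ⟨h1, h2⟩
    have : k0 ≤ k := Nat.find_min' hq h2
    have hlt : k0 < k := lt_of_le_of_ne this (Ne.symm hne)
    exact absurd h1 (not_le.2 (lt_of_lt_of_le hfind (ht hlt)))
  · intro h
    exact absurd (Finset.mem_Ico.2 ⟨hpk, hkq⟩) h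

lemma chain_antitone {d : ℕ → ℝ} {p q : ℕ} (hd : ∀ k, p < k → k < q → d k ≤ d (k - 1)) :
    ∀ k0 k1, p ≤ k0 → k0 ≤ k1 → k1 < q → d k1 ≤ d k0 := by
  intro k0 k1 hp h01
  induction k1 with
  | zero => intro _; have : k0 = 0 := by omega
            rw [this]
  | succ m IH =>
    intro hq
    rcases Nat.lt_or_ge k0 (m+1) with h | h
    · have step : d (m+1) ≤ d m := by
        have := hd (m+1) (by omega) hq
        simpa using this
      exact le_trans step (IH (by omega) (by omega))
    · have : k0 = m + 1 := by omega
      rw [this]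

/-- key rearrangement identity -/
lemma bspl_sum_reduce (ht : Monotone t) (d : ℕ → ℝ) (r p q : ℕ) {x : ℝ}
    (hx1 : t (p + r + 1) ≤ x) (hx2 : x < t q) :
    ∑ k ∈ Finset.Ico p q, d k * Bspl t (r + 1) k x
      = ∑ k ∈ Finset.Ico (p + 1) q,
          (((x - t k) * d k + (t (k + r + 1) - x) * d (k - 1)) / (t (k + r + 1) - t k))
            * Bspl t r k x := by
  rcases le_or_gt q p with hqp | hpq
  · rw [Finset.Ico_eq_empty (by omega), Finset.Ico_eq_empty (by omega), Finset.sum_empty,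
      Finset.sum_empty]
  have expand : ∀ k, d k * Bspl t (r+1) k x
      = d k * ((x - t k) / (t (k + r + 1) - t k)) * Bspl t r k x
        + d k * ((t (k + r + 2) - x) / (t (k + r + 2) - t (k + 1))) * Bspl t r (k + 1) x := by
    intro k
    show d k * ((x - t k) / (t (k + r + 1) - t k) * Bspl t r k x
        + (t (k + r + 2) - x) / (t (k + r + 2) - t (k + 1)) * Bspl t r (k + 1) x) = _
    ring
  simp only [expand]
  rw [Finset.sum_add_distrib]
  have shift : ∑ k ∈ Finset.Ico p q,
      d k * ((t (k + r + 2) - x) / (t (k + r + 2) - t (k + 1))) * Bspl t r (k + 1) x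
      = ∑ k ∈ Finset.Ico (p+1) (q+1),
      d (k-1) * ((t (k + r + 1) - x) / (t (k + r + 1) - t k)) * Bspl t r k x := by
    apply Finset.sum_nbij' (fun k => k + 1) (fun k => k - 1)
    · intro a ha; simp only [Finset.mem_Ico] at *; omega
    · intro a ha; simp only [Finset.mem_Ico] at *; omega
    · intro a ha; omega
    · intro a ha; simp only [Finset.mem_Ico] at ha; omega
    · intro a ha
      have e1 : a + 1 - 1 = a := by omega
      have e2 : a + 1 + r + 1 = a + r + 2 := by omega
      rw [e1, e2]
  rw [shift]
  have peel1 : ∑ k ∈ Finset.Ico p q, d k * ((x - t k) / (t (k + r + 1) - t k)) * Bspl t r k x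
      = ∑ k ∈ Finset.Ico (p+1) q, d k * ((x - t k) / (t (k + r + 1) - t k)) * Bspl t r k x := by
    rw [Finset.sum_eq_sum_Ico_succ_bot hpq, bspl_zero_of_ge ht r p hx1, mul_zero, zero_add]
  have peel2 : ∑ k ∈ Finset.Ico (p+1) (q+1),
      d (k-1) * ((t (k + r + 1) - x) / (t (k + r + 1) - t k)) * Bspl t r k x
      = ∑ k ∈ Finset.Ico (p+1) q, d (k-1) * ((t (k + r + 1) - x) / (t (k + r + 1) - t k)) * Bspl t r k x := by
    rw [Finset.sum_Ico_succ_top (by omega), bspl_zero_of_lt ht r q hx2, mul_zero, add_zero]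
  rw [peel1, peel2, ← Finset.sum_add_distrib]
  apply Finset.sum_congr rfl
  intro k hk
  ring

/-- a spline with antitone coefficients is antitone on the full-support range -/
lemma bspl_sum_antitone (ht : Monotone t) {q : ℕ} :
    ∀ (r p : ℕ) (d : ℕ → ℝ), (∀ k, p < k → k < q → d k ≤ d (k - 1)) →
      ∀ {x y : ℝ}, t (p + r) ≤ x → x ≤ y → y < t q →
        ∑ k ∈ Finset.Ico p q, d k * Bspl t r k y ≤ ∑ k ∈ Finset.Ico p q, d k * Bspl t r k x := by
  intro r
  induction r with
  | zero =>
    intro p d hd x y hx hxy hy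
    simp only [Nat.add_zero] at hx
    obtain ⟨kx, hpkx, hkxq, htkx, hkx1, hex⟩ := bspl_eval_zero ht hx (lt_of_le_of_lt hxy hy)
    obtain ⟨ky, hpky, hkyq, htky, hky1, hey⟩ := bspl_eval_zero ht (le_trans hx hxy) hy
    rw [hex d, hey d]
    have hxyk : kx ≤ ky := by
      by_contra hc
      push_neg at hc
      have : t (ky + 1) ≤ t kx := ht (by omega)
      exact absurd hky1 (not_lt.2 (le_trans this (le_trans htkx hxy)))
    exact chain_antitone hd kx ky hpkx hxyk hkyq
  | succ r IH =>
    intro p d hd x y hx hxy hy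
    set D : ℕ → ℝ → ℝ := fun k w =>
      ((w - t k) * d k + (t (k + r + 1) - w) * d (k - 1)) / (t (k + r + 1) - t k) with hDdef
    set E : ℕ → ℝ := fun k => max (d k) (min (d (k - 1)) (D k y)) with hEdef
    have hx'' : t (p + r + 1) ≤ x := by
      have : p + r + 1 = p + (r + 1) := by omega
      rw [this]; exact hx
    have hy'' : t (p + r + 1) ≤ y := le_trans hx'' hxy
    have hyq : y < t q := hy
    have hxq : x < t q := lt_of_le_of_lt hxy hy
    -- facts for indices with nonvanishing B at a point w
    have supp : ∀ (k : ℕ) (w : ℝ), Bspl t r k w ≠ 0 → t k ≤ w ∧ w < t (k + r + 1) := by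
      intro k w hne
      constructor
      · by_contra hc; exact hne (bspl_zero_of_lt ht r k (not_le.1 hc))
      · by_contra hc; exact hne (bspl_zero_of_ge ht r k (not_lt.1 hc))
    rw [bspl_sum_reduce ht d r p q hy'' hyq, bspl_sum_reduce ht d r p q hx'' hxq]
    have stepA : ∑ k ∈ Finset.Ico (p+1) q, D k y * Bspl t r k y
        = ∑ k ∈ Finset.Ico (p+1) q, E k * Bspl t r k y := by
      apply Finset.sum_congr rfl
      intro k hk
      rcases eq_or_ne (Bspl t r k y) 0 with h0 | h0
      · rw [h0, mul_zero, mul_zero]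
      · obtain ⟨hky, hyk⟩ := supp k y h0
        simp only [Finset.mem_Ico] at hk
        have hdk : d k ≤ d (k - 1) := hd k (by omega) hk.2
        have hΔ : 0 < t (k + r + 1) - t k := by linarith
        have h1 : d k ≤ D k y := by
          rw [hDdef]
          rw [le_div_iff₀ hΔ]
          nlinarith [mul_le_mul_of_nonneg_left hdk (sub_nonneg.2 hyk.le)]
        have h2 : D k y ≤ d (k - 1) := by
          rw [hDdef]
          rw [div_le_iff₀ hΔ]
          nlinarith [mul_le_mul_of_nonneg_left hdk (sub_nonneg.2 hky)]
        have : E k = D k y := by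
          rw [hEdef]
          simp only
          rw [min_eq_right h2, max_eq_right h1]
        rw [this]
    have stepB : ∑ k ∈ Finset.Ico (p+1) q, E k * Bspl t r k y
        ≤ ∑ k ∈ Finset.Ico (p+1) q, E k * Bspl t r k x := by
      apply IH (p+1) E
      · intro k hk1 hk2
        have hdk : d k ≤ d (k - 1) := hd k (by omega) hk2
        calc E k ≤ d (k - 1) := max_le hdk (min_le_left _ _)
          _ ≤ E (k - 1) := le_max_left _ _
      · have : p + 1 + r = p + (r + 1) := by omega
        rw [this]; exact hx
      · exact hxy
      · exact hy
    have stepC : ∑ k ∈ Finset.Ico (p+1) q, E k * Bspl t r k x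
        ≤ ∑ k ∈ Finset.Ico (p+1) q, D k x * Bspl t r k x := by
      apply Finset.sum_le_sum
      intro k hk
      rcases eq_or_ne (Bspl t r k x) 0 with h0 | h0
      · rw [h0, mul_zero, mul_zero]
      · obtain ⟨hkx, hxk⟩ := supp k x h0
        simp only [Finset.mem_Ico] at hk
        have hdk : d k ≤ d (k - 1) := hd k (by omega) hk.2
        have hΔ : 0 < t (k + r + 1) - t k := by linarith
        have h1 : d k ≤ D k x := by
          rw [hDdef, le_div_iff₀ hΔ]
          nlinarith [mul_le_mul_of_nonneg_left hdk (sub_nonneg.2 hxk.le)]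
        have hmono : D k y ≤ D k x := by
          rw [hDdef]
          apply (div_le_div_iff_of_pos_right hΔ).2
          nlinarith [mul_le_mul_of_nonneg_left hdk (sub_nonneg.2 hxy)]
        have hEk : E k ≤ D k x := max_le h1 (le_trans (min_le_right _ _) hmono)
        exact mul_le_mul_of_nonneg_right hEk (bspl_nonneg ht r k x)
    calc ∑ k ∈ Finset.Ico (p+1) q, D k y * Bspl t r k y
        = ∑ k ∈ Finset.Ico (p+1) q, E k * Bspl t r k y := stepA
      _ ≤ ∑ k ∈ Finset.Ico (p+1) q, E k * Bspl t r k x := stepB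
      _ ≤ ∑ k ∈ Finset.Ico (p+1) q, D k x * Bspl t r k x := stepC

lemma bspl_one_eq (hst : StrictMono t) (i : ℕ) (x : ℝ) :
    Bspl t 1 i x = max 0 (min ((x - t i) / (t (i + 1) - t i))
      ((t (i + 2) - x) / (t (i + 2) - t (i + 1)))) := by
  have d1 : 0 < t (i + 1) - t i := sub_pos.2 (hst (by omega))
  have d2 : 0 < t (i + 2) - t (i + 1) := sub_pos.2 (hst (by omega))
  have e : Bspl t 1 i x = (x - t i) / (t (i + 1) - t i) * Bspl t 0 i x
      + (t (i + 2) - x) / (t (i + 2) - t (i + 1)) * Bspl t 0 (i + 1) x := rfl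
  set A := (x - t i) / (t (i + 1) - t i) with hA
  set B := (t (i + 2) - x) / (t (i + 2) - t (i + 1)) with hB
  rcases lt_or_ge x (t i) with h1 | h1
  · rw [e, bspl_zero_def, bspl_zero_def, if_neg (by rintro ⟨h, -⟩; linarith),
      if_neg (by rintro ⟨h, -⟩; have := hst.monotone (show i ≤ i + 1 by omega); linarith),
      mul_zero, mul_zero, add_zero]
    have hA0 : A < 0 := div_neg_of_neg_of_pos (by linarith) d1
    rw [max_eq_left (le_trans (min_le_left _ _) hA0.le)]
  · rcases lt_or_ge x (t (i + 1)) with h2 | h2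
    · rw [e, bspl_zero_def, bspl_zero_def, if_pos ⟨h1, h2⟩,
        if_neg (by rintro ⟨h, -⟩; linarith), mul_one, mul_zero, add_zero]
      have hAB : A ≤ B := by
        have hA1 : A ≤ 1 := by rw [hA, div_le_one d1]; linarith
        have hB1 : 1 ≤ B := by rw [hB, le_div_iff₀ d2]; linarith
        linarith
      rw [min_eq_left hAB, max_eq_right (div_nonneg (by linarith) d1.le)]
    · rcases lt_or_ge x (t (i + 2)) with h3 | h3
      · rw [e, bspl_zero_def, bspl_zero_def, if_neg (by rintro ⟨-, h⟩; linarith),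
          if_pos ⟨h2, h3⟩, mul_zero, mul_one, zero_add]
        have hBA : B ≤ A := by
          have hA1 : 1 ≤ A := by rw [hA, le_div_iff₀ d1]; linarith
          have hB1 : B ≤ 1 := by rw [hB, div_le_one d2]; linarith
          linarith
        rw [min_eq_right hBA, max_eq_right (div_nonneg (by linarith) d2.le)]
      · rw [e, bspl_zero_def, bspl_zero_def, if_neg (by rintro ⟨-, h⟩; linarith),
          if_neg (by rintro ⟨-, h⟩; linarith), mul_zero, mul_zero, add_zero]
        have hB0 : B ≤ 0 := div_nonpos_of_nonpos_of_nonneg (by linarith) d2.le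
        rw [max_eq_left (le_trans (min_le_right _ _) hB0)]

lemma bspl_continuous (hst : StrictMono t) : ∀ (s : ℕ), ∀ i, Continuous (Bspl t (s + 1) i) := by
  intro s
  induction s with
  | zero =>
    intro i
    have : Bspl t 1 i = fun x => max 0 (min ((x - t i) / (t (i + 1) - t i))
        ((t (i + 2) - x) / (t (i + 2) - t (i + 1)))) := funext (bspl_one_eq hst i)
    rw [this]
    exact continuous_const.max (((continuous_id.sub continuous_const).div_const _).min
      ((continuous_const.sub continuous_id).div_const _))
  | succ s IH =>
    intro i
    have : Bspl t (s + 2) i = fun x =>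
        (x - t i) / (t (i + s + 2) - t i) * Bspl t (s + 1) i x
          + (t (i + s + 3) - x) / (t (i + s + 3) - t (i + 1)) * Bspl t (s + 1) (i + 1) x := by
      funext x
      have := bspl_succ t (s + 1) i x
      rw [this]
      norm_num
      constructor <;> · left; congr 2 <;> omega
    rw [this]
    exact ((((continuous_id.sub continuous_const).div_const _)).mul (IH i)).add
      ((((continuous_const.sub continuous_id).div_const _)).mul (IH (i + 1)))

open Filter Topology in
lemma bspl_zero_eventually (i : ℕ) {w : ℝ} (hw : ∀ j, w ≠ t j) :
    ∀ᶠ x in 𝓝 w, Bspl t 0 i x = Bspl t 0 i w := by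
  rcases lt_trichotomy w (t i) with h | h | h
  · filter_upwards [IsOpen.eventually_mem isOpen_Iio (Set.mem_Iio.2 h)] with x hx
    rw [bspl_zero_def, bspl_zero_def, if_neg (by rintro ⟨h1, -⟩; exact absurd hx (not_lt.2 h1)),
      if_neg (by rintro ⟨h1, -⟩; linarith)]
  · exact absurd h (hw i)
  · rcases lt_trichotomy w (t (i + 1)) with h2 | h2 | h2
    · filter_upwards [IsOpen.eventually_mem isOpen_Ioo (Set.mem_Ioo.2 ⟨h, h2⟩)] with x hx
      obtain ⟨hx1, hx2⟩ := Set.mem_Ioo.1 hx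
      rw [bspl_zero_def, bspl_zero_def, if_pos ⟨hx1.le, hx2⟩, if_pos ⟨h.le, h2⟩]
    · exact absurd h2 (hw (i + 1))
    · filter_upwards [IsOpen.eventually_mem isOpen_Ioi (Set.mem_Ioi.2 h2)] with x hx
      rw [bspl_zero_def, bspl_zero_def, if_neg (by rintro ⟨-, h1⟩; exact absurd hx (not_lt.2 h1.le)),
        if_neg (by rintro ⟨-, h1⟩; linarith)]

open Filter Topology in
lemma bspl_hasDerivAt (hst : StrictMono t) :
    ∀ (s i : ℕ) {w : ℝ}, (∀ j, w ≠ t j) →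
      HasDerivAt (Bspl t (s + 1) i)
        (((s : ℝ) + 1) / (t (i + s + 1) - t i) * Bspl t s i w
          - ((s : ℝ) + 1) / (t (i + s + 2) - t (i + 1)) * Bspl t s (i + 1) w) w := by
  intro s
  induction s with
  | zero =>
    intro i w hw
    have hd : HasDerivAt (fun x => (x - t i) / (t (i + 1) - t i) * Bspl t 0 i w
        + (t (i + 2) - x) / (t (i + 2) - t (i + 1)) * Bspl t 0 (i + 1) w)
        (1 / (t (i + 1) - t i) * Bspl t 0 i w
          - 1 / (t (i + 2) - t (i + 1)) * Bspl t 0 (i + 1) w) w := by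
      have h1 : HasDerivAt (fun x : ℝ => (x - t i) / (t (i + 1) - t i) * Bspl t 0 i w)
          (1 / (t (i + 1) - t i) * Bspl t 0 i w) w := by
        simpa using (((hasDerivAt_id w).sub_const (t i)).div_const (t (i + 1) - t i)).mul_const
          (Bspl t 0 i w)
      have h2 : HasDerivAt (fun x : ℝ => (t (i + 2) - x) / (t (i + 2) - t (i + 1)) * Bspl t 0 (i + 1) w)
          ((-1) / (t (i + 2) - t (i + 1)) * Bspl t 0 (i + 1) w) w := by
        simpa using (((hasDerivAt_id w).const_sub (t (i + 2))).div_const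
          (t (i + 2) - t (i + 1))).mul_const (Bspl t 0 (i + 1) w)
      have := h1.add h2
      refine this.congr_deriv ?_
      ring
    rw [show ((0:ℕ):ℝ) + 1 = 1 from by norm_num, show i + 0 + 1 = i + 1 from by omega,
      show i + 0 + 2 = i + 2 from by omega]
    apply hd.congr_of_eventuallyEq
    filter_upwards [bspl_zero_eventually i hw, bspl_zero_eventually (i + 1) hw] with x h1 h2
    rw [bspl_succ, h1, h2]
  | succ s IH =>
    intro i w hw
    have hne : ∀ a b : ℕ, a < b → t b - t a ≠ 0 := fun a b h => sub_ne_zero.2 (hst h).ne'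
    have key : HasDerivAt (fun x => (x - t i) / (t (i + s + 2) - t i) * Bspl t (s + 1) i x
        + (t (i + s + 3) - x) / (t (i + s + 3) - t (i + 1)) * Bspl t (s + 1) (i + 1) x)
        (((s : ℝ) + 2) / (t (i + s + 2) - t i) * Bspl t (s + 1) i w
          - ((s : ℝ) + 2) / (t (i + s + 3) - t (i + 1)) * Bspl t (s + 1) (i + 1) w) w := by
      have hf1 : HasDerivAt (fun x : ℝ => (x - t i) / (t (i + s + 2) - t i))
          (1 / (t (i + s + 2) - t i)) w := by
        simpa using ((hasDerivAt_id w).sub_const (t i)).div_const (t (i + s + 2) - t i)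
      have hf2 : HasDerivAt (fun x : ℝ => (t (i + s + 3) - x) / (t (i + s + 3) - t (i + 1)))
          ((-1) / (t (i + s + 3) - t (i + 1))) w := by
        simpa using ((hasDerivAt_id w).const_sub (t (i + s + 3))).div_const
          (t (i + s + 3) - t (i + 1))
      have hB1 := IH i hw
      have hB2 := IH (i + 1) hw
      have h1 := hf1.mul hB1
      have h2 := hf2.mul hB2
      have hsum := h1.add h2
      refine hsum.congr_deriv ?_
      have e1 : i + 1 + s + 1 = i + s + 2 := by omega
      have e2 : i + 1 + s + 2 = i + s + 3 := by omega
      have e3 : i + 1 + 1 = i + 2 := by omega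
      rw [e1, e2, e3] at hB2 ⊢
      -- expand the degree (s+1) values at w
      rw [show Bspl t (s + 1) i w = (w - t i) / (t (i + s + 1) - t i) * Bspl t s i w
          + (t (i + s + 2) - w) / (t (i + s + 2) - t (i + 1)) * Bspl t s (i + 1) w from rfl]
      rw [show Bspl t (s + 1) (i + 1) w
          = (w - t (i + 1)) / (t (i + 1 + s + 1) - t (i + 1)) * Bspl t s (i + 1) w
          + (t (i + 1 + s + 2) - w) / (t (i + 1 + s + 2) - t (i + 1 + 1)) * Bspl t s (i + 1 + 1) w
          from rfl]
      rw [show i + 1 + s + 1 = i + s + 2 from by omega, show i + 1 + s + 2 = i + s + 3 from by omega,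
        show i + 1 + 1 = i + 2 from by omega]
      have n1 : t (i + s + 1) - t i ≠ 0 := hne _ _ (by omega)
      have n2 : t (i + s + 2) - t (i + 1) ≠ 0 := hne _ _ (by omega)
      have n3 : t (i + s + 3) - t (i + 2) ≠ 0 := hne _ _ (by omega)
      have n4 : t (i + s + 2) - t i ≠ 0 := hne _ _ (by omega)
      have n5 : t (i + s + 3) - t (i + 1) ≠ 0 := hne _ _ (by omega)
      field_simp
      ring
    rw [show (((s+1:ℕ)):ℝ) + 1 = (s:ℝ) + 2 from by push_cast; ring,
      show i + (s + 1) + 1 = i + s + 2 from by omega, show i + (s + 1) + 2 = i + s + 3 from by omega]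
    apply key.congr_of_eventuallyEq
    apply Filter.Eventually.of_forall
    intro x
    rw [show Bspl t (s + 1 + 1) i x = (x - t i) / (t (i + (s + 1) + 1) - t i) * Bspl t (s + 1) i x
      + (t (i + (s + 1) + 2) - x) / (t (i + (s + 1) + 2) - t (i + 1)) * Bspl t (s + 1) (i + 1) x
      from rfl]
    rw [show i + (s + 1) + 1 = i + s + 2 from by omega, show i + (s + 1) + 2 = i + s + 3 from by omega]


end Aux

section Aux2
open Filter Topology
variable {t : ℕ → ℝ}

lemma mvt_lower (F : Finset ℝ) :
    ∀ (x y : ℝ), x < y → ∀ (f h : ℝ → ℝ), ContinuousOn f (Set.Icc x y) →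
      (∀ w ∈ Set.Ioo x y, w ∉ F → HasDerivAt f (h w) w) →
      ∃ ξ ∈ Set.Ioo x y, h ξ * (y - x) ≤ f y - f x := by
  induction F using Finset.strongInduction with
  | _ F IH =>
    intro x y hxy f h hc hd
    by_cases hF : ∃ τ ∈ F, τ ∈ Set.Ioo x y
    · obtain ⟨τ, hτF, hτ⟩ := hF
      have hsub : F.erase τ ⊂ F := Finset.erase_ssubset hτF
      have nomem : ∀ w, w ∉ F.erase τ → w ≠ τ → w ∉ F := by
        intro w hw hne hmem
        exact hw (Finset.mem_erase.2 ⟨hne, hmem⟩)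
      obtain ⟨ξa, hξa, hA⟩ := IH (F.erase τ) hsub x τ hτ.1 f h
        (hc.mono (Set.Icc_subset_Icc_right hτ.2.le))
        (fun w hw hwF => hd w ⟨hw.1, hw.2.trans hτ.2⟩ (nomem w hwF (ne_of_lt hw.2)))
      obtain ⟨ξb, hξb, hB⟩ := IH (F.erase τ) hsub τ y hτ.2 f h
        (hc.mono (Set.Icc_subset_Icc_left hτ.1.le))
        (fun w hw hwF => hd w ⟨hτ.1.trans hw.1, hw.2⟩ (nomem w hwF (ne_of_gt hw.1)))
      rcases le_total (h ξa) (h ξb) with hab | hab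
      · refine ⟨ξa, ⟨hξa.1, hξa.2.trans hτ.2⟩, ?_⟩
        nlinarith [mul_le_mul_of_nonneg_right hab (sub_nonneg.2 hτ.2.le)]
      · refine ⟨ξb, ⟨hτ.1.trans hξb.1, hξb.2⟩, ?_⟩
        nlinarith [mul_le_mul_of_nonneg_right hab (sub_nonneg.2 hτ.1.le)]
    · push_neg at hF
      have hd' : ∀ w ∈ Set.Ioo x y, HasDerivAt f (h w) w := fun w hw => hd w hw (hF w · hw)
      obtain ⟨ξ, hξ, he⟩ := exists_hasDerivAt_eq_slope f h hxy hc hd'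
      refine ⟨ξ, hξ, ?_⟩
      rw [he, div_mul_cancel₀ _ (sub_ne_zero.2 hxy.ne')]

lemma mvt_upper (F : Finset ℝ) (x y : ℝ) (hxy : x < y) (f h : ℝ → ℝ)
    (hc : ContinuousOn f (Set.Icc x y))
    (hd : ∀ w ∈ Set.Ioo x y, w ∉ F → HasDerivAt f (h w) w) :
    ∃ ξ ∈ Set.Ioo x y, f y - f x ≤ h ξ * (y - x) := by
  obtain ⟨ξ, hξ, hle⟩ := mvt_lower F x y hxy (fun w => -f w) (fun w => -h w) hc.neg
    (fun w hw hwF => (hd w hw hwF).neg)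
  exact ⟨ξ, hξ, by linarith⟩

theorem bspl_strict_concave (hst : StrictMono t) (r' Q : ℕ) (c s : ℕ → ℝ)
    (hjump : ∀ k, 1 ≤ k → k < Q → c k - c (k - 1) = s k * (t (k + (r' + 1)) - t k))
    (hs : ∀ k, 2 ≤ k → k < Q → s k ≤ s (k - 1)) :
    ConcaveOn ℝ (Set.Ico (t (r' + 1)) (t Q))
      (fun w => ∑ k ∈ Finset.range Q, c k * Bspl t (r' + 1) k w) := by
  have ht : Monotone t := hst.monotone
  set r : ℕ := r' + 1 with hrdef
  set g : ℝ → ℝ := fun w => ∑ k ∈ Finset.range Q, c k * Bspl t r k w with hgdef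
  set R : ℝ := (r' : ℝ) + 1 with hRdef
  have hRpos : 0 < R := by positivity
  set h : ℝ → ℝ := fun w => ∑ k ∈ Finset.Ico 1 Q, (R * s k) * Bspl t r' k w with hhdef
  have hgcont : Continuous g := by
    apply continuous_finset_sum
    intro k _
    exact continuous_const.mul (bspl_continuous hst r' k)
  -- derivative of g off the knots
  have hderiv : ∀ w : ℝ, t r ≤ w → w < t Q → (∀ j, w ≠ t j) → HasDerivAt g (h w) w := by
    intro w hw1 hw2 hw
    have hQ : 1 ≤ Q := by
      by_contra hc0
      have : Q = 0 := by omega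
      subst this
      exact absurd (lt_of_le_of_lt hw1 hw2) (not_lt.2 (ht (Nat.zero_le r)))
    have hsum : HasDerivAt g (∑ k ∈ Finset.range Q, c k *
        (R / (t (k + r' + 1) - t k) * Bspl t r' k w
          - R / (t (k + r' + 2) - t (k + 1)) * Bspl t r' (k + 1) w)) w := by
      apply HasDerivAt.fun_sum
      intro k _
      exact (bspl_hasDerivAt hst r' k hw).const_mul (c k)
    convert hsum using 1
    have expand : ∀ k, c k * (R / (t (k + r' + 1) - t k) * Bspl t r' k w
        - R / (t (k + r' + 2) - t (k + 1)) * Bspl t r' (k + 1) w)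
        = c k * (R / (t (k + r' + 1) - t k)) * Bspl t r' k w
          - c k * (R / (t (k + r' + 2) - t (k + 1))) * Bspl t r' (k + 1) w := by
      intro k; ring
    rw [Finset.sum_congr rfl (fun k _ => expand k), Finset.sum_sub_distrib]
    have shift : ∑ k ∈ Finset.range Q, c k * (R / (t (k + r' + 2) - t (k + 1))) * Bspl t r' (k + 1) w
        = ∑ k ∈ Finset.Ico 1 (Q + 1), c (k - 1) * (R / (t (k + r' + 1) - t k)) * Bspl t r' k w := by
      rw [Finset.range_eq_Ico]
      apply Finset.sum_nbij' (fun k => k + 1) (fun k => k - 1)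
      · intro a ha; simp only [Finset.mem_Ico] at *; omega
      · intro a ha; simp only [Finset.mem_Ico] at *; omega
      · intro a ha; omega
      · intro a ha; simp only [Finset.mem_Ico] at ha; omega
      · intro a ha
        have e1 : a + 1 - 1 = a := by omega
        have e2 : a + 1 + r' + 1 = a + r' + 2 := by omega
        rw [e1, e2]
    rw [shift]
    have peel1 : ∑ k ∈ Finset.range Q, c k * (R / (t (k + r' + 1) - t k)) * Bspl t r' k w
        = ∑ k ∈ Finset.Ico 1 Q, c k * (R / (t (k + r' + 1) - t k)) * Bspl t r' k w := by
      rw [Finset.range_eq_Ico, Finset.sum_eq_sum_Ico_succ_bot hQ,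
        bspl_zero_of_ge ht r' 0 (show t (0 + r' + 1) ≤ w by
          rw [show 0 + r' + 1 = r from by omega]; exact hw1), mul_zero, zero_add]
    have peel2 : ∑ k ∈ Finset.Ico 1 (Q + 1), c (k - 1) * (R / (t (k + r' + 1) - t k)) * Bspl t r' k w
        = ∑ k ∈ Finset.Ico 1 Q, c (k - 1) * (R / (t (k + r' + 1) - t k)) * Bspl t r' k w := by
      rw [Finset.sum_Ico_succ_top hQ, bspl_zero_of_lt ht r' Q hw2, mul_zero, add_zero]
    rw [peel1, peel2, ← Finset.sum_sub_distrib]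
    apply Finset.sum_congr rfl
    intro k hk
    simp only [Finset.mem_Ico] at hk
    have hΔ : t (k + r) - t k ≠ 0 := sub_ne_zero.2 (hst (by omega)).ne'
    have e3 : k + r' + 1 = k + r := by omega
    rw [e3, ← sub_mul, ← sub_mul, hjump k hk.1 hk.2]
    field_simp
  -- concavity via slopes
  apply concaveOn_of_slope_anti_adjacent (convex_Ico _ _)
  intro x y z hx hz hxy hyz
  obtain ⟨hxl, hxr⟩ := Set.mem_Ico.1 hx
  obtain ⟨hzl, hzr⟩ := Set.mem_Ico.1 hz
  set F : Finset ℝ := (Finset.range (Q + 1)).image t with hFdef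
  have hnotknot : ∀ w : ℝ, w < t Q → w ∉ F → (∀ j, w ≠ t j) := by
    intro w hwQ hwF j hwj
    rcases le_or_gt j Q with hj | hj
    · exact hwF (Finset.mem_image.2 ⟨j, Finset.mem_range.2 (by omega), hwj.symm⟩)
    · exact absurd hwQ (not_lt.2 (hwj ▸ ht (by omega)))
  have hdF1 : ∀ w ∈ Set.Ioo x y, w ∉ F → HasDerivAt g (h w) w := by
    intro w hw hwF
    exact hderiv w (le_trans hxl hw.1.le) (lt_trans (lt_trans hw.2 hyz) hzr)
      (hnotknot w (lt_trans (lt_trans hw.2 hyz) hzr) hwF)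
  have hdF2 : ∀ w ∈ Set.Ioo y z, w ∉ F → HasDerivAt g (h w) w := by
    intro w hw hwF
    exact hderiv w (le_trans hxl (le_trans hxy.le hw.1.le)) (lt_trans hw.2 hzr)
      (hnotknot w (lt_trans hw.2 hzr) hwF)
  obtain ⟨ξ1, hξ1, hlow⟩ := mvt_lower F x y hxy g h hgcont.continuousOn hdF1
  obtain ⟨ξ2, hξ2, hup⟩ := mvt_upper F y z hyz g h hgcont.continuousOn hdF2
  have hanti : h ξ2 ≤ h ξ1 := by
    apply bspl_sum_antitone ht r' 1 (fun k => R * s k)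
    · intro k hk1 hk2
      exact mul_le_mul_of_nonneg_left (hs k (by omega) hk2) hRpos.le
    · show t (1 + r') ≤ ξ1
      have : 1 + r' = r := by omega
      rw [this]
      exact le_trans hxl hξ1.1.le
    · exact (hξ1.2.trans hξ2.1).le
    · exact lt_trans hξ2.2 hzr
  have h1 : h ξ1 ≤ (g y - g x) / (y - x) := by
    rw [le_div_iff₀ (sub_pos.2 hxy)]
    linarith
  have h2 : (g z - g y) / (z - y) ≤ h ξ2 := by
    rw [div_le_iff₀ (sub_pos.2 hyz)]
    linarith
  linarith

variable {T : ℕ → ℝ}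

/-- the perturbed knot sequence -/
noncomputable def pk (T : ℕ → ℝ) (m i : ℕ) : ℝ := T i - (1/2 : ℝ)^i / (m + 1)

variable {T : ℕ → ℝ}

lemma pk_lt (T : ℕ → ℝ) (m i : ℕ) : pk T m i < T i := by
  unfold pk
  have : (0:ℝ) < (1/2:ℝ)^i / (m+1) := by positivity
  linarith

lemma pk_strictMono (hT : Monotone T) (m : ℕ) : StrictMono (pk T m) := by
  apply strictMono_nat_of_lt_succ
  intro i
  unfold pk
  have h1 : T i ≤ T (i + 1) := hT (Nat.le_succ i)
  have h2 : (1/2:ℝ)^(i+1) / (m+1) < (1/2:ℝ)^i / (m+1) := by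
    have hp : (1/2:ℝ)^(i+1) < (1/2:ℝ)^i := by
      apply pow_lt_pow_right_of_lt_one₀ (by norm_num) (by norm_num) (Nat.lt_succ_self i)
    have hm : (0:ℝ) < (m:ℝ) + 1 := by positivity
    exact div_lt_div_of_pos_right hp hm -- maybe wrong name
  linarith

lemma pk_tendsto (i : ℕ) : Tendsto (fun m : ℕ => pk T m i) atTop (𝓝 (T i)) := by
  unfold pk
  have h0 : Tendsto (fun m : ℕ => (1/2:ℝ)^i / (m + 1)) atTop (𝓝 0) := by
    have := tendsto_one_div_add_atTop_nhds_zero_nat.const_mul ((1/2:ℝ)^i)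
    simp only [mul_zero] at this
    convert this using 2 with m
    rw [div_eq_mul_one_div]
  have h1 : Tendsto (fun m : ℕ => T i - (1/2:ℝ)^i / (m+1)) atTop (𝓝 (T i - 0)) :=
    Tendsto.sub tendsto_const_nhds h0
  simpa using h1

lemma pk_eventually_gt {x : ℝ} (i : ℕ) (hx : x < T i) : ∀ᶠ m in atTop, x < pk T m i :=
  (pk_tendsto i).eventually (eventually_gt_nhds hx)

lemma bspl_pk_tendsto (hT : Monotone T) :
    ∀ (s i : ℕ) (x : ℝ), Tendsto (fun m => Bspl (pk T m) s i x) atTop (𝓝 (Bspl T s i x)) := by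
  intro s
  induction s with
  | zero =>
    intro i x
    apply Tendsto.congr' _ tendsto_const_nhds
    symm
    rcases le_or_gt (T i) x with h1 | h1
    · rcases lt_or_ge x (T (i + 1)) with h2 | h2
      · filter_upwards [pk_eventually_gt (i + 1) h2] with m hm
        show Bspl (pk T m) 0 i x = Bspl T 0 i x
        have hp1 : pk T m i ≤ x := le_of_lt (lt_of_lt_of_le (pk_lt T m i) h1)
        rw [bspl_zero_def, bspl_zero_def, if_pos ⟨hp1, hm⟩, if_pos ⟨h1, h2⟩]
      · apply Eventually.of_forall
        intro m
        show Bspl (pk T m) 0 i x = Bspl T 0 i x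
        have hp2 : ¬ x < pk T m (i + 1) :=
          not_lt.2 (le_trans (pk_lt T m (i + 1)).le h2)
        rw [bspl_zero_def, bspl_zero_def, if_neg (by rintro ⟨-, h⟩; exact hp2 h),
          if_neg (by rintro ⟨-, h⟩; linarith)]
    · filter_upwards [pk_eventually_gt i h1] with m hm
      show Bspl (pk T m) 0 i x = Bspl T 0 i x
      rw [bspl_zero_def, bspl_zero_def, if_neg (by rintro ⟨h, -⟩; linarith),
        if_neg (by rintro ⟨h, -⟩; linarith)]
  | succ s IH =>
    intro i x
    have key1 : Tendsto (fun m => (x - pk T m i) / (pk T m (i + s + 1) - pk T m i)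
        * Bspl (pk T m) s i x) atTop
        (𝓝 ((x - T i) / (T (i + s + 1) - T i) * Bspl T s i x)) := by
      rcases eq_or_ne (T (i + s + 1) - T i) 0 with hd | hd
      · have hzero : ∀ᶠ m in atTop, (x - pk T m i) / (pk T m (i + s + 1) - pk T m i)
            * Bspl (pk T m) s i x = 0 := by
          have hTT : T (i + s + 1) = T i := by linarith [sub_eq_zero.1 hd]
          rcases le_or_gt (T i) x with hx | hx
          · apply Eventually.of_forall
            intro m
            rw [bspl_zero_of_ge (pk_strictMono hT m).monotone s i
              (le_trans (pk_lt T m (i + s + 1)).le (hTT ▸ hx)), mul_zero]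
          · filter_upwards [pk_eventually_gt i hx] with m hm
            rw [bspl_zero_of_lt (pk_strictMono hT m).monotone s i hm, mul_zero]
        rw [hd, div_zero, zero_mul]
        exact Tendsto.congr' (hzero.mono fun m hm => hm.symm) tendsto_const_nhds
      · apply Tendsto.mul _ (IH i x)
        exact Tendsto.div (tendsto_const_nhds.sub (pk_tendsto i))
          ((pk_tendsto (i + s + 1)).sub (pk_tendsto i)) hd
    have key2 : Tendsto (fun m => (pk T m (i + s + 2) - x) / (pk T m (i + s + 2) - pk T m (i + 1))
        * Bspl (pk T m) s (i + 1) x) atTop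
        (𝓝 ((T (i + s + 2) - x) / (T (i + s + 2) - T (i + 1)) * Bspl T s (i + 1) x)) := by
      rcases eq_or_ne (T (i + s + 2) - T (i + 1)) 0 with hd | hd
      · have hzero : ∀ᶠ m in atTop, (pk T m (i + s + 2) - x) / (pk T m (i + s + 2) - pk T m (i + 1))
            * Bspl (pk T m) s (i + 1) x = 0 := by
          have hTT : T (i + s + 2) = T (i + 1) := by linarith [sub_eq_zero.1 hd]
          rcases le_or_gt (T (i + 1)) x with hx | hx
          · apply Eventually.of_forall
            intro m
            have : pk T m (i + 1 + s + 1) ≤ x := by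
              have e : i + 1 + s + 1 = i + s + 2 := by omega
              rw [e]
              exact le_trans (pk_lt T m (i + s + 2)).le (hTT ▸ hx)
            rw [bspl_zero_of_ge (pk_strictMono hT m).monotone s (i + 1) this, mul_zero]
          · filter_upwards [pk_eventually_gt (i + 1) hx] with m hm
            rw [bspl_zero_of_lt (pk_strictMono hT m).monotone s (i + 1) hm, mul_zero]
        rw [hd, div_zero, zero_mul]
        exact Tendsto.congr' (hzero.mono fun m hm => hm.symm) tendsto_const_nhds
      · apply Tendsto.mul _ (IH (i + 1) x)
        exact Tendsto.div ((pk_tendsto (i + s + 2)).sub tendsto_const_nhds)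
          ((pk_tendsto (i + s + 2)).sub (pk_tendsto (i + 1))) hd
    have := key1.add key2
    exact this


end Aux2

open Filter Topology

/-- a tensor-product B-spline is concave in coordinate `j` (other variables
held fixed) on the interior knot range if the scaled second differences of the
coefficients in the `j`-th index are nonpositive, where `Δ_{i_j} = t_{j, i_j + r_j} - t_{j, i_j}`. -/
theorem tensor_bspline_concave_in_coordinate
    (N : ℕ) (n r : Fin N → ℕ) (t : Fin N → ℕ → ℝ) (ht : ∀ l, Monotone (t l))
    (a : (Fin N → ℕ) → ℝ) (j : Fin N)
    (hΔ : ∀ i, 0 < t j (i + r j) - t j i)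
    (ha : ∀ i : Fin N → ℕ, (∀ l, i l < n l) → 2 ≤ i j →
      (a i - a (Function.update i j (i j - 1))) / (t j (i j + r j) - t j (i j)) ≤
        (a (Function.update i j (i j - 1)) - a (Function.update i j (i j - 2))) /
          (t j (i j - 1 + r j) - t j (i j - 1)))
    (x : Fin N → ℝ) :
    ConcaveOn ℝ (Set.Icc (t j (r j)) (t j (n j)))
      (fun s => ∑ i : (∀ l : Fin N, Fin (n l)),
        a (fun l => (i l : ℕ)) *
          ∏ l, Bspl (t l) (r l) (i l) (Function.update x j s l)) := by
  have hrr : 1 ≤ r j := by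
    by_contra hc
    have h0 : r j = 0 := by omega
    have := hΔ 0
    rw [h0] at this
    simp at this
  -- trivial case : no basis functions at all
  rcases Nat.eq_zero_or_pos (n j) with hnn0 | hnn
  · have hemp : IsEmpty (∀ l : Fin N, Fin (n l)) := by
      constructor
      intro i
      have := i j
      rw [hnn0] at this
      exact this.elim0
    have hf : (fun s => ∑ i : (∀ l : Fin N, Fin (n l)),
        a (fun l => (i l : ℕ)) * ∏ l, Bspl (t l) (r l) (i l) (Function.update x j s l))
        = fun _ : ℝ => (0 : ℝ) := by
      funext s
      rw [Finset.univ_eq_empty, Finset.sum_empty]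
    rw [hf]
    exact concaveOn_const 0 (convex_Icc _ _)
  -- main case
  set T : ℕ → ℝ := t j with hT
  set rr : ℕ := r j with hrrdef
  set nn : ℕ := n j with hnndef
  obtain ⟨r', hr'⟩ : ∃ r', rr = r' + 1 := ⟨rr - 1, by omega⟩
  set OT := (∀ l : { l : Fin N // l ≠ j }, Fin (n (l : Fin N))) with hOT
  set idx : ℕ → OT → (Fin N → ℕ) :=
    fun k io l => if h : l = j then k else (io ⟨l, h⟩ : ℕ) with hidx
  set W : OT → ℝ := fun io => ∏ l : { l : Fin N // l ≠ j },
    Bspl (t l) (r l) (io l) (x l) with hWdef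
  set c : ℕ → ℝ := fun k => ∑ io : OT, a (idx k io) * W io with hcdef
  have hW : ∀ io, 0 ≤ W io := by
    intro io
    exact Finset.prod_nonneg fun l _ => bspl_nonneg (ht l) _ _ _
  -- the multivariate sum is a univariate spline sum
  have key : ∀ s : ℝ,
      (∑ i : (∀ l : Fin N, Fin (n l)), a (fun l => (i l : ℕ)) *
        ∏ l, Bspl (t l) (r l) (i l) (Function.update x j s l))
      = ∑ k ∈ Finset.range nn, c k * Bspl T rr k s := by
    intro s
    set e := (Equiv.piSplitAt j (fun l : Fin N => Fin (n l))).symm with he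
    rw [← Equiv.sum_comp e (fun i => a (fun l => (i l : ℕ)) *
      ∏ l, Bspl (t l) (r l) (i l) (Function.update x j s l)), Fintype.sum_prod_type]
    rw [← Fin.sum_univ_eq_sum_range (fun k => c k * Bspl T rr k s) nn]
    apply Finset.sum_congr rfl
    intro v _
    have hval : ∀ io : OT, (fun l => ((e (v, io)) l : ℕ)) = idx (v : ℕ) io := by
      intro io
      funext l
      by_cases h : l = j
      · subst h
        simp [hidx, he, Equiv.piSplitAt_symm_apply]
      · simp [hidx, he, Equiv.piSplitAt_symm_apply, h]
    have hprod : ∀ io : OT, (∏ l, Bspl (t l) (r l) ((e (v, io)) l) (Function.update x j s l))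
        = Bspl T rr v s * W io := by
      intro io
      rw [← Finset.mul_prod_erase Finset.univ _ (Finset.mem_univ j)]
      congr 1
      · have h1 : ((e (v, io)) j : ℕ) = (v : ℕ) := by
          simp [he, Equiv.piSplitAt_symm_apply]
        rw [Function.update_self]
        rw [hT, hrrdef, h1]
      · rw [hWdef]
        rw [Finset.prod_subtype (Finset.univ.erase j)
          (p := fun l : Fin N => l ≠ j) (by simp)]
        apply Finset.prod_congr rfl
        intro l _
        rw [Function.update_of_ne l.2]
        congr 1
        simp [he, Equiv.piSplitAt_symm_apply, l.2]
    calc ∑ io : OT, a (fun l => ((e (v, io)) l : ℕ)) *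
          ∏ l, Bspl (t l) (r l) ((e (v, io)) l) (Function.update x j s l)
        = ∑ io : OT, a (idx (v : ℕ) io) * (Bspl T rr (v : ℕ) s * W io) := by
          apply Finset.sum_congr rfl
          intro io _
          rw [hval io, hprod io]
      _ = c (v : ℕ) * Bspl T rr (v : ℕ) s := by
          rw [hcdef]
          rw [Finset.sum_mul]
          apply Finset.sum_congr rfl
          intro io _
          ring
  have hTmono : Monotone T := ht j
  -- scaled slope condition for c
  have hsdif : ∀ k, 2 ≤ k → k < nn →
      (c k - c (k-1)) / (T (k + rr) - T k) ≤ (c (k-1) - c (k-2)) / (T (k - 1 + rr) - T (k-1)) := by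
    intro k hk2 hklt
    have hterm : ∀ io : OT,
        (a (idx k io) - a (idx (k-1) io)) / (T (k + rr) - T k) * W io ≤
        (a (idx (k-1) io) - a (idx (k-2) io)) / (T (k - 1 + rr) - T (k-1)) * W io := by
      intro io
      apply mul_le_mul_of_nonneg_right _ (hW io)
      have hilt : ∀ l, idx k io l < n l := by
        intro l
        show (if h : l = j then k else (io ⟨l, h⟩ : ℕ)) < n l
        by_cases h : l = j
        · rw [dif_pos h, h, ← hnndef]
          omega
        · rw [dif_neg h]
          exact (io ⟨l, h⟩).isLt
      have hij : idx k io j = k := by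
        show (if h : j = j then k else (io ⟨j, h⟩ : ℕ)) = k
        rw [dif_pos rfl]
      have hupd : ∀ k' : ℕ, Function.update (idx k io) j k' = idx k' io := by
        intro k'
        funext l
        by_cases h : l = j
        · rw [h, Function.update_self]
          show _ = (if h : j = j then k' else (io ⟨j, h⟩ : ℕ))
          rw [dif_pos rfl]
        · rw [Function.update_of_ne h]
          show (if h : l = j then k else (io ⟨l, h⟩ : ℕ))
            = (if h : l = j then k' else (io ⟨l, h⟩ : ℕ))
          rw [dif_neg h, dif_neg h]
      have hu1 : Function.update (idx k io) j (idx k io j - 1) = idx (k-1) io := by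
        rw [hij]; exact hupd (k-1)
      have hu2 : Function.update (idx k io) j (idx k io j - 2) = idx (k-2) io := by
        rw [hij]; exact hupd (k-2)
      have hha := ha (idx k io) hilt (by rw [hij]; exact hk2)
      rw [hij] at hha
      rw [hupd (k-1), hupd (k-2)] at hha
      exact hha
    have hform : ∀ k' : ℕ, 1 ≤ k' →
        (c k' - c (k'-1)) / (T (k' + rr) - T k')
        = ∑ io : OT, (a (idx k' io) - a (idx (k'-1) io)) / (T (k' + rr) - T k') * W io := by
      intro k' _
      rw [hcdef]
      simp only
      rw [← Finset.sum_sub_distrib, Finset.sum_div]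
      apply Finset.sum_congr rfl
      intro io _
      rw [← sub_mul, mul_div_right_comm]
    rw [show k - 2 = k - 1 - 1 from by omega]
    rw [hform k (by omega), hform (k-1) (by omega)]
    rw [show k - 1 - 1 = k - 2 from by omega]
    exact Finset.sum_le_sum fun io _ => hterm io
  -- extended slope sequence
  set se : ℕ → ℝ := fun k => if k < nn then (c k - c (k-1)) / (T (k + rr) - T k)
      else (c (nn-1) - c (nn-1-1)) / (T ((nn-1) + rr) - T (nn-1)) with hsedef
  have hse : ∀ k, 2 ≤ k → se k ≤ se (k-1) := by
    intro k hk2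
    rcases lt_or_ge k nn with h | h
    · have h' : k - 1 < nn := by omega
      rw [hsedef]
      simp only
      rw [if_pos h, if_pos h']
      exact hsdif k hk2 h
    · rcases eq_or_lt_of_le h with heq | hlt
      · rw [hsedef]
        simp only
        rw [if_neg (by omega), if_pos (show k - 1 < nn by omega)]
        rw [show k - 1 = nn - 1 from by omega]
      · rw [hsedef]
        simp only
        rw [if_neg (by omega), if_neg (by omega)]
  set Q : ℕ := nn + rr with hQdef
  set ce : ℕ → ℝ := fun k => c 0 + ∑ i2 ∈ Finset.Icc 1 k, se i2 * (T (i2 + rr) - T i2) with hcedef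
  have hce : ∀ k, k < nn → ce k = c k := by
    intro k
    induction k with
    | zero =>
      intro _
      rw [hcedef]
      simp
    | succ m IH =>
      intro hm
      have hm' : m < nn := by omega
      rw [hcedef]
      simp only
      rw [Finset.sum_Icc_succ_top (by omega : 1 ≤ m + 1), ← add_assoc]
      have hcm : c 0 + (∑ i2 ∈ Finset.Icc 1 m, se i2 * (T (i2+rr) - T i2)) = c m := by
        rw [← IH hm', hcedef]
      rw [hcm, hsedef]
      simp only
      rw [if_pos hm, show m + 1 - 1 = m from rfl]
      have hΔm : T (m + 1 + rr) - T (m + 1) ≠ 0 := ne_of_gt (hΔ (m+1))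
      rw [div_mul_cancel₀ _ hΔm]
      ring
  have hGf : ∀ w, w ≤ T nn →
      ∑ k ∈ Finset.range Q, ce k * Bspl T rr k w = ∑ k ∈ Finset.range nn, c k * Bspl T rr k w := by
    intro w hw
    rw [Finset.range_eq_Ico,
      ← Finset.sum_Ico_consecutive _ (Nat.zero_le nn) (show nn ≤ Q by omega)]
    have hzero2 : ∑ k ∈ Finset.Ico nn Q, ce k * Bspl T rr k w = 0 := by
      apply Finset.sum_eq_zero
      intro k hk
      simp only [Finset.mem_Ico] at hk
      have hTk : T nn ≤ T k := hTmono hk.1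
      rcases lt_or_eq_of_le (le_trans hw hTk) with hlt | heqw
      · rw [bspl_zero_of_lt hTmono rr k hlt, mul_zero]
      · have hz : Bspl T rr k (T k) = 0 := by
          apply bspl_left_knot hTmono
          linarith [hΔ k]
        rw [← heqw] at hz
        rw [hz, mul_zero]
    rw [hzero2, add_zero]
    exact Finset.sum_congr (Finset.range_eq_Ico nn).symm fun k hk => by rw [hce k (Finset.mem_range.1 hk)]
  -- perturbed coefficients
  set sm : ℕ → ℕ → ℝ := fun m k => se k - (k : ℝ) / (m + 1) with hsmdef
  set cm : ℕ → ℕ → ℝ := fun m k =>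
    c 0 + ∑ i2 ∈ Finset.Icc 1 k, sm m i2 * (pk T m (i2 + rr) - pk T m i2) with hcmdef
  have hconc : ∀ m : ℕ, ConcaveOn ℝ (Set.Ico (pk T m rr) (pk T m Q))
      (fun w => ∑ k ∈ Finset.range Q, cm m k * Bspl (pk T m) rr k w) := by
    intro m
    have hjump : ∀ k, 1 ≤ k → k < Q →
        cm m k - cm m (k-1) = sm m k * (pk T m (k + rr) - pk T m k) := by
      intro k hk _
      obtain ⟨b, rfl⟩ : ∃ b, k = b + 1 := ⟨k - 1, by omega⟩
      rw [hcmdef]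
      simp only
      rw [Finset.sum_Icc_succ_top (by omega : 1 ≤ b + 1), show b + 1 - 1 = b from rfl]
      ring
    have hsm2 : ∀ k, 2 ≤ k → k < Q → sm m k ≤ sm m (k-1) := by
      intro k hk _
      rw [hsmdef]
      simp only
      have h1 := hse k hk
      have h2 : ((k - 1 : ℕ) : ℝ) ≤ (k : ℝ) := by
        have : ((k-1:ℕ):ℝ) = (k:ℝ) - 1 := by
          push_cast [Nat.cast_sub (show 1 ≤ k by omega)]
          ring
        rw [this]; linarith
      have h3 : (0:ℝ) < (m:ℝ) + 1 := by positivity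
      have h4 : ((k-1:ℕ):ℝ) / ((m:ℝ)+1) ≤ (k:ℝ) / ((m:ℝ)+1) := by gcongr
      linarith
    rw [hr'] at hjump ⊢
    exact bspl_strict_concave (pk_strictMono hTmono m) r' Q (cm m) (sm m) hjump hsm2
  -- pass to the limit
  refine ⟨convex_Icc _ _, ?_⟩
  intro u hu v hv μ ν hμ hν hμν
  simp only [smul_eq_mul]
  rw [key u, key v, key (μ * u + ν * v)]
  set y0 : ℝ := μ * u + ν * v with hy0def
  have hy0 : y0 ∈ Set.Icc (T rr) (T nn) := by
    have hcx := (convex_Icc (T rr) (T nn)) hu hv hμ hν hμν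
    simpa [smul_eq_mul] using hcx
  rw [← hGf u hu.2, ← hGf v hv.2, ← hGf y0 hy0.2]
  have hQgt : T nn < T Q := by
    have := hΔ nn
    rw [hQdef]
    linarith
  have hev : ∀ᶠ m in atTop,
      μ * (∑ k ∈ Finset.range Q, cm m k * Bspl (pk T m) rr k u)
      + ν * (∑ k ∈ Finset.range Q, cm m k * Bspl (pk T m) rr k v)
      ≤ ∑ k ∈ Finset.range Q, cm m k * Bspl (pk T m) rr k y0 := by
    filter_upwards [pk_eventually_gt Q hQgt] with m hm
    have hmem : ∀ w, w ∈ Set.Icc (T rr) (T nn) → w ∈ Set.Ico (pk T m rr) (pk T m Q) := by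
      intro w hw
      exact ⟨le_trans (pk_lt T m rr).le hw.1, lt_of_le_of_lt hw.2 hm⟩
    have hcc := (hconc m).2 (hmem u hu) (hmem v hv) hμ hν hμν
    simpa [smul_eq_mul] using hcc
  have hcmt : ∀ k, Tendsto (fun m => cm m k) atTop (𝓝 (ce k)) := by
    intro k
    rw [hcmdef, hcedef]
    simp only
    apply Tendsto.const_add
    apply tendsto_finset_sum
    intro i2 _
    apply Tendsto.mul
    · rw [hsmdef]
      simp only
      have hz : Tendsto (fun m : ℕ => (i2:ℝ) / ((m:ℝ)+1)) atTop (𝓝 0) := by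
        have := tendsto_one_div_add_atTop_nhds_zero_nat.const_mul (i2:ℝ)
        simp only [mul_zero] at this
        convert this using 2 with m
        rw [div_eq_mul_one_div]
      have hz2 : Tendsto (fun m : ℕ => se i2 - (i2:ℝ)/((m:ℝ)+1)) atTop (𝓝 (se i2 - 0)) :=
        Tendsto.sub tendsto_const_nhds hz
      simpa using hz2
    · exact (pk_tendsto (i2+rr)).sub (pk_tendsto i2)
  have hgt : ∀ w, Tendsto (fun m => ∑ k ∈ Finset.range Q, cm m k * Bspl (pk T m) rr k w) atTop
      (𝓝 (∑ k ∈ Finset.range Q, ce k * Bspl T rr k w)) := by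
    intro w
    apply tendsto_finset_sum
    intro k _
    exact (hcmt k).mul (bspl_pk_tendsto hTmono rr k w)
  exact le_of_tendsto_of_tendsto (((hgt u).const_mul μ).add ((hgt v).const_mul ν)) (hgt y0) hev
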